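/- For the bi-objective problem OMZJ with f1 = OneMax and f2 = ZeroJump_k on bit-strings of length n, where k is an integer with 1 < k < n/2, the Pareto set equals exactly {0^n} ∪ { x : |x|_0 ≤ n−k }. -/
import Mathlib


open Finset

/-- Number of one-bits of a bit-string. -/
def onesCount {n : ℕ} (x : Fin n → Bool) : ℕ :=
  (Finset.univ.filter fun i => x i = true).card

/-- Number of zero-bits of a bit-string. -/
def zerosCount {n : ℕ} (x : Fin n → Bool) : ℕ :=
  (Finset.univ.filter fun i => x i = false).card

/-- Number of leading one-bits. -/
def leadingOnes {n : ℕ} (x : Fin n → Bool) : ℕ :=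
  (Finset.univ.filter fun i : Fin n => ∀ j : Fin n, j ≤ i → x j = true).card

/-- Number of trailing zero-bits. -/
def trailingZeroes {n : ℕ} (x : Fin n → Bool) : ℕ :=
  (Finset.univ.filter fun i : Fin n => ∀ j : Fin n, i ≤ j → x j = false).card

/-- `y` dominates `x` for the bi-objective maximisation problem `(f1, f2)`. -/
def dominates {n : ℕ} (f1 f2 : (Fin n → Bool) → ℕ) (y x : Fin n → Bool) : Prop :=
  f1 x ≤ f1 y ∧ f2 x ≤ f2 y ∧ (f1 x < f1 y ∨ f2 x < f2 y)

/-- `x` is Pareto optimal: no solution dominates it. -/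
def paretoOptimal {n : ℕ} (f1 f2 : (Fin n → Bool) → ℕ) (x : Fin n → Bool) : Prop :=
  ∀ y, ¬ dominates f1 f2 y x

/-- `x` is a non-global Pareto local optimum: not Pareto optimal, and not dominated by
any bit-string at Hamming distance exactly 1. -/
def nonGlobalParetoLocalOpt {n : ℕ} (f1 f2 : (Fin n → Bool) → ℕ) (x : Fin n → Bool) : Prop :=
  ¬ paretoOptimal f1 f2 x ∧ ∀ y, hammingDist y x = 1 → ¬ dominates f1 f2 y x

/-- The ZeroJump function with jump parameter `k`. -/
def zeroJump (n k : ℕ) (x : Fin n → Bool) : ℕ :=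
  if zerosCount x ≤ n - k ∨ x = (fun _ => false) then k + zerosCount x else n - zerosCount x

/-- The OneJump function with jump parameter `k`. -/
def oneJump (n k : ℕ) (x : Fin n → Bool) : ℕ :=
  if onesCount x ≤ n - k ∨ x = (fun _ => true) then k + onesCount x else n - onesCount x

/-- Block `j` (0-indexed) of the bit-string `x` (with `b` blocks of length `ℓ`) is all-ones. -/
def blockAllOnes (b ℓ : ℕ) (x : Fin (b * ℓ) → Bool) (j : Fin b) : Prop :=
  ∀ i : Fin (b * ℓ), (i : ℕ) / ℓ = (j : ℕ) → x i = true

/-- Block `j` (0-indexed) of the bit-string `x` is all-zeros. -/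
def blockAllZeros (b ℓ : ℕ) (x : Fin (b * ℓ) → Bool) (j : Fin b) : Prop :=
  ∀ i : Fin (b * ℓ), (i : ℕ) / ℓ = (j : ℕ) → x i = false

instance (b ℓ : ℕ) (x : Fin (b * ℓ) → Bool) (j : Fin b) : Decidable (blockAllOnes b ℓ x j) := by
  unfold blockAllOnes; infer_instance

instance (b ℓ : ℕ) (x : Fin (b * ℓ) → Bool) (j : Fin b) : Decidable (blockAllZeros b ℓ x j) := by
  unfold blockAllZeros; infer_instance

/-- OneRoyalRoad: `ℓ` times the number of all-ones blocks. -/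
def oneRoyalRoad (b ℓ : ℕ) (x : Fin (b * ℓ) → Bool) : ℕ :=
  ℓ * (Finset.univ.filter fun j : Fin b => blockAllOnes b ℓ x j).card

/-- ZeroRoyalRoad: `ℓ` times the number of all-zeros blocks. -/
def zeroRoyalRoad (b ℓ : ℕ) (x : Fin (b * ℓ) → Bool) : ℕ :=
  ℓ * (Finset.univ.filter fun j : Fin b => blockAllZeros b ℓ x j).card

/-- Number of one-bits in block `j` of `x`. -/
def blockOnes (b ℓ : ℕ) (x : Fin (b * ℓ) → Bool) (j : Fin b) : ℕ :=
  (Finset.univ.filter fun i : Fin (b * ℓ) => (i : ℕ) / ℓ = (j : ℕ) ∧ x i = true).card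

/-- Number of zero-bits in block `j` of `x`. -/
def blockZeros (b ℓ : ℕ) (x : Fin (b * ℓ) → Bool) (j : Fin b) : ℕ :=
  (Finset.univ.filter fun i : Fin (b * ℓ) => (i : ℕ) / ℓ = (j : ℕ) ∧ x i = false).card

lemma ones_add_zeros {n : ℕ} (x : Fin n → Bool) : onesCount x + zerosCount x = n := by
  have h := Finset.card_filter_add_card_filter_not
    (s := (Finset.univ : Finset (Fin n))) (p := fun i => x i = true)
  simp only [Finset.card_univ, Fintype.card_fin, Bool.not_eq_true] at h
  exact h

lemma zeros_const_false {n : ℕ} : zerosCount (fun _ : Fin n => false) = n := by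
  simp [zerosCount]

lemma ones_update {n : ℕ} (x : Fin n → Bool) (i : Fin n) (hi : x i = false) :
    onesCount (Function.update x i true) = onesCount x + 1 := by
  unfold onesCount
  have h : (Finset.univ.filter fun j => Function.update x i true j = true)
      = insert i (Finset.univ.filter fun j => x j = true) := by
    ext j
    simp only [Finset.mem_filter, Finset.mem_univ, true_and, Finset.mem_insert,
      Function.update_apply]
    by_cases h : j = i <;> simp [h]
  rw [h, Finset.card_insert_of_notMem (by simp [hi])]

/-- For OMZJ (f1 = OneMax, f2 = ZeroJump_k) with 1 < k < n/2, the Pareto set is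
exactly {0^n} ∪ { x : |x|_0 ≤ n-k }. -/
theorem OMZJ_pareto_set (n k : ℕ) (hk : 1 < k) (hkn : 2 * k < n) (x : Fin n → Bool) :
    paretoOptimal onesCount (zeroJump n k) x ↔
      x = (fun _ => false) ∨ zerosCount x ≤ n - k := by
  have hozx := ones_add_zeros x
  constructor
  · intro hpo
    by_contra hcon
    push_neg at hcon
    obtain ⟨hx0, hz⟩ := hcon
    have hzpos : 0 < zerosCount x := by omega
    obtain ⟨i, hi⟩ := Finset.card_pos.mp hzpos
    simp only [Finset.mem_filter, Finset.mem_univ, true_and] at hi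
    set y := Function.update x i true with hy
    have hoy : onesCount y = onesCount x + 1 := ones_update x i hi
    have hozy := ones_add_zeros y
    have hzy : zerosCount y + 1 = zerosCount x := by omega
    apply hpo y
    refine ⟨by omega, ?_, Or.inl (by omega)⟩
    have hfx : zeroJump n k x = n - zerosCount x := by
      rw [zeroJump, if_neg]
      push_neg
      exact ⟨hz, hx0⟩
    rw [hfx, zeroJump]
    by_cases hc : zerosCount y ≤ n - k ∨ y = (fun _ => false)
    · rw [if_pos hc]
      omega
    · rw [if_neg hc]
      omega
  · intro h y hdom
    obtain ⟨h1, h2, h3⟩ := hdom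
    have hozy := ones_add_zeros y
    rcases h with h | h
    · -- x = 0^n
      have hzx : zerosCount x = n := by rw [h]; exact zeros_const_false
      have hfx : zeroJump n k x = k + n := by
        rw [zeroJump, if_pos (Or.inr h), hzx]
      rw [hfx] at h2 h3
      have hfy : zeroJump n k y ≤ k + zerosCount y := by
        rw [zeroJump]
        by_cases hc : zerosCount y ≤ n - k ∨ y = (fun _ => false)
        · rw [if_pos hc]
        · rw [if_neg hc]; omega
      omega
    · -- zerosCount x ≤ n - k
      have hfx : zeroJump n k x = k + zerosCount x := by
        rw [zeroJump, if_pos (Or.inl h)]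
      rw [hfx] at h2 h3
      rw [zeroJump] at h2 h3
      by_cases hc : zerosCount y ≤ n - k ∨ y = (fun _ => false)
      · rw [if_pos hc] at h2 h3
        rcases hc with hc | hc
        · omega
        · have : zerosCount y = n := by rw [hc]; exact zeros_const_false
          omega
      · rw [if_neg hc] at h2 h3
        push_neg at hc
        omega
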